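/- Let Σ_2 = {0,1}^ℕ with the metric d(s,t) = 0 if s = t and d(s,t) = 1/2^{k−1} otherwise, where k = min{i : s_i ≠ t_i}. Define f_0, f_1 : Σ_2 → Σ_2 by f_0(s_0 s_1 s_2 …) = 0 s_0 s_1 s_2 … and f_1(s_0 s_1 s_2 …) = 1 s_0 s_1 s_2 … (prepending the symbol 0, respectively 1). Then the IFS 𝓕 = {Σ_2; f_0, f_1} is uniformly contracting (with contracting ratio 1/2) and has the average shadowing property. -/

import Mathlib

open Filter Finset

/-- Composition along σ: `IFSIter f σ n = f (σ (n-1)) ∘ ⋯ ∘ f (σ 0)`, with `IFSIter f σ 0 = id`. -/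
def IFSIter {X : Type*} {Λ : Type*} (f : Λ → X → X) (σ : ℕ → Λ) : ℕ → X → X
  | 0 => id
  | n + 1 => f (σ n) ∘ IFSIter f σ n

/-- `(x i)` is a δ-average pseudo-orbit of the IFS `f`. -/
def IsAvgPseudoOrbit {X : Type*} [MetricSpace X] {Λ : Type*}
    (f : Λ → X → X) (δ : ℝ) (x : ℕ → X) : Prop :=
  ∃ N : ℕ, ∃ σ : ℕ → Λ, ∀ n : ℕ, N ≤ n →
    (1 / n : ℝ) * ∑ i ∈ Finset.range n, dist (f (σ i) (x i)) (x (i + 1)) < δ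

/-- `(x i)` is ε-shadowed in average by the point `z`. -/
def AvgShadowedBy {X : Type*} [MetricSpace X] {Λ : Type*}
    (f : Λ → X → X) (ε : ℝ) (x : ℕ → X) (z : X) : Prop :=
  ∃ σ : ℕ → Λ,
    Filter.limsup (fun n : ℕ =>
      (1 / n : ℝ) * ∑ i ∈ Finset.range n, dist (IFSIter f σ i z) (x i)) Filter.atTop < ε

/-- The IFS `f` has the average shadowing property. -/
def HasAvgShadowing {X : Type*} [MetricSpace X] {Λ : Type*} (f : Λ → X → X) : Prop :=
  ∀ ε : ℝ, 0 < ε → ∃ δ : ℝ, 0 < δ ∧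
    ∀ x : ℕ → X, IsAvgPseudoOrbit f δ x → ∃ z : X, AvgShadowedBy f ε x z

/-- An ε-chain of the IFS `f` from `x` to `y`. -/
def IsEpsChain {X : Type*} [MetricSpace X] {Λ : Type*}
    (f : Λ → X → X) (ε : ℝ) (x y : X) : Prop :=
  ∃ n : ℕ, 0 < n ∧ ∃ p : ℕ → X, ∃ lam : ℕ → Λ,
    p 0 = x ∧ p n = y ∧ ∀ i < n, dist (f (lam i) (p i)) (p (i + 1)) ≤ ε

/-- `x` is a chain recurrent point of the IFS `f`. -/
def ChainRecurrentPt {X : Type*} [MetricSpace X] {Λ : Type*}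
    (f : Λ → X → X) (x : X) : Prop :=
  ∀ ε : ℝ, 0 < ε → IsEpsChain f ε x x

/-- The two prepending maps on the full 2-shift space. -/
def shiftIFS : Fin 2 → (ℕ → Fin 2) → (ℕ → Fin 2) :=
  fun b s n => match n with
    | 0 => b
    | m + 1 => s m

/-- with the metric `d(s,t) = (1/2)^(k-1)` (where `k` is the first index
where `s` and `t` differ), the IFS of the two prepending maps on `Σ₂ = {0,1}^ℕ` is
uniformly contracting with contracting ratio `1/2` and has the average shadowing
property. -/
theorem shiftIFS_avgShadowing [MetricSpace (ℕ → Fin 2)]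
    (hd : ∀ (s t : ℕ → Fin 2) (k : ℕ), (∀ i < k, s i = t i) → s k ≠ t k →
      dist s t = (1 / 2 : ℝ) ^ ((k : ℤ) - 1)) :
    (∀ (b : Fin 2) (s t : ℕ → Fin 2),
      dist (shiftIFS b s) (shiftIFS b t) ≤ (1 / 2) * dist s t) ∧
    HasAvgShadowing shiftIFS := by
  have hcontr : ∀ (b : Fin 2) (s t : ℕ → Fin 2),
      dist (shiftIFS b s) (shiftIFS b t) ≤ (1 / 2) * dist s t := by
    intro b s t
    by_cases hst : s = t
    · subst hst; simp
    · have hex : ∃ i, s i ≠ t i := by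
        by_contra h; push_neg at h; exact hst (funext h)
      have hks : s (Nat.find hex) ≠ t (Nat.find hex) := Nat.find_spec hex
      have hkm : ∀ i < Nat.find hex, s i = t i := by
        intro i hi
        by_contra h; exact Nat.find_min hex hi h
      have h1 : dist s t = (1/2:ℝ) ^ (((Nat.find hex):ℤ) - 1) := hd s t _ hkm hks
      have h2 : dist (shiftIFS b s) (shiftIFS b t)
          = (1/2:ℝ) ^ (((Nat.find hex + 1 : ℕ):ℤ) - 1) := by
        apply hd
        · intro i hi
          match i with
          | 0 => rfl
          | m+1 => exact hkm m (by omega)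
        · exact hks
      rw [h1, h2]
      have h3 : (((Nat.find hex + 1 : ℕ):ℤ) - 1) = 1 + (((Nat.find hex):ℤ) - 1) := by
        push_cast; ring
      rw [h3, zpow_add₀ (by norm_num : (1/2:ℝ) ≠ 0)]
      simp
  refine ⟨hcontr, ?_⟩
  intro ε hε
  refine ⟨ε/3, by linarith, ?_⟩
  rintro x ⟨N, σ, hσ⟩
  refine ⟨x 0, σ, ?_⟩
  set u : ℕ → ℝ := fun i => dist (IFSIter shiftIFS σ i (x 0)) (x i) with hu
  set e : ℕ → ℝ := fun i => dist (shiftIFS (σ i) (x i)) (x (i+1)) with he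
  have hu0 : u 0 = 0 := by simp [hu, IFSIter]
  have hstep : ∀ i, u (i+1) ≤ (1/2) * u i + e i := by
    intro i
    calc u (i+1) = dist (shiftIFS (σ i) (IFSIter shiftIFS σ i (x 0))) (x (i+1)) := rfl
      _ ≤ dist (shiftIFS (σ i) (IFSIter shiftIFS σ i (x 0))) (shiftIFS (σ i) (x i))
            + dist (shiftIFS (σ i) (x i)) (x (i+1)) := dist_triangle _ _ _
      _ ≤ (1/2) * u i + e i := add_le_add (hcontr _ _ _) le_rfl
  have hsum : ∀ n, (∑ i ∈ range n, u i) + 2 * u n ≤ 2 * ∑ j ∈ range n, e j := by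
    intro n
    induction n with
    | zero => simp [hu0]
    | succ n ih =>
      rw [Finset.sum_range_succ, Finset.sum_range_succ]
      have h1 := hstep n
      linarith
  have hev : ∀ᶠ n in atTop, (fun n : ℕ =>
      (1 / n : ℝ) * ∑ i ∈ Finset.range n, dist (IFSIter shiftIFS σ i (x 0)) (x i)) n
      ≤ 2 * (ε/3) := by
    filter_upwards [eventually_ge_atTop N] with n hn
    have h1 := hσ n hn
    have h2 : (0:ℝ) ≤ 2 * u n := by positivity
    have h3 : ∑ i ∈ range n, u i ≤ 2 * ∑ i ∈ range n, e i := by linarith [hsum n]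
    have hnn : (0:ℝ) ≤ 1/(n:ℝ) := by positivity
    calc (1/(n:ℝ)) * ∑ i ∈ range n, u i ≤ (1/(n:ℝ)) * (2 * ∑ i ∈ range n, e i) :=
          mul_le_mul_of_nonneg_left h3 hnn
      _ = 2 * ((1/(n:ℝ)) * ∑ i ∈ range n, e i) := by ring
      _ ≤ 2 * (ε/3) := by nlinarith
  have hcb : IsCoboundedUnder (· ≤ ·) atTop (fun n : ℕ =>
      (1 / n : ℝ) * ∑ i ∈ Finset.range n, dist (IFSIter shiftIFS σ i (x 0)) (x i)) := by
    apply isCoboundedUnder_le_of_le atTop (x := 0)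
    intro n
    positivity
  exact lt_of_le_of_lt (Filter.limsup_le_of_le hcb hev) (by linarith)
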